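/- Let c^1,...,c^m be strictly upper triangular N×N real matrices and let h be a positive-definite symmetric N×N matrix. Then for every ε>0 there exists an invertible N×N matrix J such that, with c̃^a = J c^a J^{-1}, the inequality Σ_{a=1}^m ⟨h c̃^a v_a, c̃^a v_a⟩ ≤ ε Σ_{a=1}^m ⟨h v_a, v_a⟩ holds for all vectors v_1,...,v_m ∈ ℝ^N, where ⟨h x, y⟩ = Σ_{A,B} h_{AB} x^A y^B. -/

import Mathlib

open Matrix

private lemma quad_smul {N : ℕ} (h : Matrix (Fin N) (Fin N) ℝ) (r : ℝ) (v : Fin N → ℝ) :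
    h.mulVec (r • v) ⬝ᵥ (r • v) = r ^ 2 * (h.mulVec v ⬝ᵥ v) := by
  rw [Matrix.mulVec_smul, smul_dotProduct, dotProduct_smul, smul_eq_mul, smul_eq_mul]
  ring

private lemma exists_lam {N : ℕ} (hN : 0 < N) (h : Matrix (Fin N) (Fin N) ℝ)
    (hpos : h.PosDef) :
    ∃ lam : ℝ, 0 < lam ∧ ∀ v : Fin N → ℝ, lam * ‖v‖ ^ 2 ≤ h.mulVec v ⬝ᵥ v := by
  have hquad : ∀ v : Fin N → ℝ, v ≠ 0 → 0 < h.mulVec v ⬝ᵥ v := by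
    intro v hv
    have := hpos.dotProduct_mulVec_pos hv
    simpa [dotProduct_comm] using this
  have hcont : Continuous fun v : Fin N → ℝ => h.mulVec v ⬝ᵥ v := by
    simp only [Matrix.mulVec, dotProduct]
    fun_prop
  have hsph : IsCompact (Metric.sphere (0 : Fin N → ℝ) 1) := isCompact_sphere _ _
  have hne : (Metric.sphere (0 : Fin N → ℝ) 1).Nonempty := by
    have : Nontrivial (Fin N → ℝ) := by
      haveI : Nonempty (Fin N) := ⟨⟨0, hN⟩⟩
      infer_instance
    exact NormedSpace.sphere_nonempty.mpr (by norm_num)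
  obtain ⟨v₀, hv₀mem, hv₀min⟩ := hsph.exists_isMinOn hne (hcont.continuousOn)
  have hv₀norm : ‖v₀‖ = 1 := by simpa using hv₀mem
  have hv₀ne : v₀ ≠ 0 := by
    intro hz; rw [hz] at hv₀norm; simp at hv₀norm
  refine ⟨h.mulVec v₀ ⬝ᵥ v₀, hquad v₀ hv₀ne, ?_⟩
  intro v
  rcases eq_or_ne v 0 with rfl | hv
  · simp
  · have hvn : (0:ℝ) < ‖v‖ := norm_pos_iff.mpr hv
    set u : Fin N → ℝ := ‖v‖⁻¹ • v with hu
    have hun : ‖u‖ = 1 := by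
      rw [hu, norm_smul]; simp [abs_of_pos (inv_pos.mpr hvn), inv_mul_cancel₀ hvn.ne']
    have humem : u ∈ Metric.sphere (0 : Fin N → ℝ) 1 := by simpa using hun
    have hmin := hv₀min humem
    have hquadu : h.mulVec u ⬝ᵥ u = ‖v‖⁻¹ ^ 2 * (h.mulVec v ⬝ᵥ v) := quad_smul h _ v
    have hle : h.mulVec v₀ ⬝ᵥ v₀ ≤ ‖v‖⁻¹ ^ 2 * (h.mulVec v ⬝ᵥ v) := by
      simpa [hquadu] using hmin
    have h2 : (h.mulVec v₀ ⬝ᵥ v₀) * ‖v‖ ^ 2 ≤ ‖v‖⁻¹ ^ 2 * (h.mulVec v ⬝ᵥ v) * ‖v‖ ^ 2 :=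
      mul_le_mul_of_nonneg_right hle (by positivity)
    calc h.mulVec v₀ ⬝ᵥ v₀ * ‖v‖ ^ 2 ≤ ‖v‖⁻¹ ^ 2 * (h.mulVec v ⬝ᵥ v) * ‖v‖ ^ 2 := h2
      _ = h.mulVec v ⬝ᵥ v := by field_simp

private lemma upper_bound {N : ℕ} (h : Matrix (Fin N) (Fin N) ℝ) (w : Fin N → ℝ) :
    h.mulVec w ⬝ᵥ w ≤ (∑ A, ∑ B, |h A B|) * ‖w‖ ^ 2 := by
  have hw : ∀ A, |w A| ≤ ‖w‖ := fun A => by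
    simpa using norm_le_pi_norm w A
  calc h.mulVec w ⬝ᵥ w = ∑ A, (∑ B, h A B * w B) * w A := by
        simp [Matrix.mulVec, dotProduct]
    _ ≤ ∑ A, ∑ B, |h A B| * ‖w‖ ^ 2 := by
        apply Finset.sum_le_sum
        intro A _
        rw [Finset.sum_mul]
        apply Finset.sum_le_sum
        intro B _
        have h1 : (h A B * w B) * w A ≤ |h A B| * (|w B| * |w A|) := by
          calc (h A B * w B) * w A ≤ |(h A B * w B) * w A| := le_abs_self _
            _ = |h A B| * (|w B| * |w A|) := by rw [abs_mul, abs_mul]; ring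
        refine h1.trans ?_
        have h3 : |w B| * |w A| ≤ ‖w‖ * ‖w‖ :=
          mul_le_mul (hw B) (hw A) (abs_nonneg _) (norm_nonneg _)
        calc |h A B| * (|w B| * |w A|) ≤ |h A B| * (‖w‖ * ‖w‖) :=
            mul_le_mul_of_nonneg_left h3 (abs_nonneg _)
          _ = |h A B| * ‖w‖ ^ 2 := by ring
    _ = (∑ A, ∑ B, |h A B|) * ‖w‖ ^ 2 := by
        rw [Finset.sum_mul]
        congr 1
        funext A
        rw [Finset.sum_mul]

private lemma mulVec_norm_bound {N : ℕ} (M : Matrix (Fin N) (Fin N) ℝ) (v : Fin N → ℝ) :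
    ‖M.mulVec v‖ ≤ (∑ A, ∑ B, |M A B|) * ‖v‖ := by
  have hK : (0:ℝ) ≤ ∑ A, ∑ B, |M A B| :=
    Finset.sum_nonneg fun A _ => Finset.sum_nonneg fun B _ => abs_nonneg _
  rw [pi_norm_le_iff_of_nonneg (by positivity)]
  intro A
  have h1 : |M.mulVec v A| ≤ (∑ B, |M A B|) * ‖v‖ := by
    calc |M.mulVec v A| = |∑ B, M A B * v B| := by simp [Matrix.mulVec, dotProduct]
      _ ≤ ∑ B, |M A B * v B| := Finset.abs_sum_le_sum_abs _ _
      _ ≤ ∑ B, |M A B| * ‖v‖ := by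
          apply Finset.sum_le_sum
          intro B _
          rw [abs_mul]
          exact mul_le_mul_of_nonneg_left (by simpa using norm_le_pi_norm v B) (abs_nonneg _)
      _ = (∑ B, |M A B|) * ‖v‖ := by rw [Finset.sum_mul]
  refine le_trans (by simpa using h1) ?_
  apply mul_le_mul_of_nonneg_right _ (norm_nonneg _)
  exact Finset.single_le_sum (f := fun A' => ∑ B, |M A' B|)
    (fun A' _ => Finset.sum_nonneg fun B _ => abs_nonneg _) (Finset.mem_univ A)

theorem stmt1 (N m : ℕ) (hN : 0 < N) (hm : 0 < m)
    (c : Fin m → Matrix (Fin N) (Fin N) ℝ)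
    (hupper : ∀ a (A B : Fin N), B ≤ A → c a A B = 0)
    (h : Matrix (Fin N) (Fin N) ℝ) (hsymm : h.IsSymm) (hpos : h.PosDef) :
    ∀ ε : ℝ, 0 < ε → ∃ J : Matrix (Fin N) (Fin N) ℝ, IsUnit J ∧
      ∀ v : Fin m → (Fin N → ℝ),
        ∑ a : Fin m, (h.mulVec ((J * c a * J⁻¹).mulVec (v a))) ⬝ᵥ
            ((J * c a * J⁻¹).mulVec (v a))
          ≤ ε * ∑ a : Fin m, (h.mulVec (v a)) ⬝ᵥ (v a) := by
  intro ε hε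
  obtain ⟨lam, hlam, hlb⟩ := exists_lam hN h hpos
  set C : ℝ := (∑ A, ∑ B, |h A B|) + 1 with hCdef
  have hC0 : (0:ℝ) ≤ ∑ A, ∑ B, |h A B| :=
    Finset.sum_nonneg fun A _ => Finset.sum_nonneg fun B _ => abs_nonneg _
  have hC : (0:ℝ) < C := by positivity
  set δ : ℝ := Real.sqrt (ε * lam / C) with hδdef
  have hδ : (0:ℝ) < δ := Real.sqrt_pos.mpr (by positivity)
  set S : ℝ := (∑ a, ∑ A, ∑ B, |c a A B|) + 1 with hSdef
  have hS0 : (0:ℝ) ≤ ∑ a, ∑ A, ∑ B, |c a A B| :=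
    Finset.sum_nonneg fun a _ => Finset.sum_nonneg fun A _ =>
      Finset.sum_nonneg fun B _ => abs_nonneg _
  have hS : (0:ℝ) < S := by positivity
  set t : ℝ := max 1 (S / δ) with htdef
  have ht1 : (1:ℝ) ≤ t := le_max_left _ _
  have ht0 : (0:ℝ) < t := lt_of_lt_of_le one_pos ht1
  have htS : S / t ≤ δ := by
    rw [div_le_iff₀ ht0]
    calc S = (S / δ) * δ := by field_simp
      _ ≤ t * δ := mul_le_mul_of_nonneg_right (le_max_right _ _) hδ.le
      _ = δ * t := mul_comm _ _
  set d : Fin N → ℝ := fun A => t ^ (A : ℕ) with hddef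
  have hd0 : ∀ A, (0:ℝ) < d A := fun A => by rw [hddef]; positivity
  refine ⟨diagonal d, ?_, ?_⟩
  · rw [Matrix.isUnit_iff_isUnit_det, det_diagonal]
    exact isUnit_iff_ne_zero.mpr (Finset.prod_ne_zero_iff.mpr fun A _ => (hd0 A).ne')
  intro v
  have hinv : (diagonal d)⁻¹ = diagonal (fun A => (d A)⁻¹) := by
    apply Matrix.inv_eq_right_inv
    rw [Matrix.diagonal_mul_diagonal]
    convert Matrix.diagonal_one using 2
    funext A
    exact mul_inv_cancel₀ (hd0 A).ne'
  have hentry : ∀ a (A B : Fin N),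
      |(diagonal d * c a * (diagonal d)⁻¹) A B| ≤ |c a A B| / t := by
    intro a A B
    rw [hinv]
    have he : (diagonal d * c a * diagonal fun A => (d A)⁻¹) A B
        = d A * c a A B * (d B)⁻¹ := by
      rw [Matrix.mul_diagonal, Matrix.diagonal_mul]
    rw [he]
    rcases le_or_gt B A with hBA | hAB
    · rw [hupper a A B hBA]
      simp
    · have hAB' : (A : ℕ) + 1 ≤ (B : ℕ) := hAB
      have hpow : d A * (d B)⁻¹ ≤ t⁻¹ := by
        rw [hddef]
        simp only
        rw [mul_inv_le_iff₀ (by positivity)]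
        calc (t:ℝ) ^ (A:ℕ) = t⁻¹ * t ^ ((A:ℕ)+1) := by
              rw [pow_succ]; field_simp
          _ ≤ t⁻¹ * t ^ (B:ℕ) := by
              apply mul_le_mul_of_nonneg_left _ (by positivity)
              exact pow_le_pow_right₀ ht1 hAB'
      have habs : |d A * c a A B * (d B)⁻¹| = |c a A B| * (d A * (d B)⁻¹) := by
        rw [abs_mul, abs_mul, abs_of_pos (hd0 A), abs_of_pos (inv_pos.mpr (hd0 B))]
        ring
      rw [habs, div_eq_mul_inv]
      exact mul_le_mul_of_nonneg_left hpow (abs_nonneg _)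
  have hKbound : ∀ a : Fin m,
      (∑ A, ∑ B, |(diagonal d * c a * (diagonal d)⁻¹) A B|) ≤ δ := by
    intro a
    calc (∑ A, ∑ B, |(diagonal d * c a * (diagonal d)⁻¹) A B|)
        ≤ ∑ A, ∑ B, |c a A B| / t :=
          Finset.sum_le_sum fun A _ => Finset.sum_le_sum fun B _ => hentry a A B
      _ = (∑ A, ∑ B, |c a A B|) / t := by
          rw [Finset.sum_div]
          congr 1; funext A; rw [Finset.sum_div]
      _ ≤ S / t := by
          have hle : (∑ A, ∑ B, |c a A B|) ≤ S := by
            rw [hSdef]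
            have := Finset.single_le_sum
              (f := fun a' => ∑ A, ∑ B, |c a' A B|)
              (fun a' _ => Finset.sum_nonneg fun A _ =>
                Finset.sum_nonneg fun B _ => abs_nonneg _) (Finset.mem_univ a)
            linarith
          gcongr
      _ ≤ δ := htS
  have key : ∀ a : Fin m,
      h.mulVec ((diagonal d * c a * (diagonal d)⁻¹).mulVec (v a)) ⬝ᵥ
        ((diagonal d * c a * (diagonal d)⁻¹).mulVec (v a))
      ≤ ε * (h.mulVec (v a) ⬝ᵥ (v a)) := by
    intro a
    set M := diagonal d * c a * (diagonal d)⁻¹ with hM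
    set w := M.mulVec (v a) with hw
    have hwle : ‖w‖ ≤ δ * ‖v a‖ := by
      calc ‖w‖ ≤ (∑ A, ∑ B, |M A B|) * ‖v a‖ := mulVec_norm_bound M (v a)
        _ ≤ δ * ‖v a‖ := mul_le_mul_of_nonneg_right (hKbound a) (norm_nonneg _)
    have h1 : h.mulVec w ⬝ᵥ w ≤ C * ‖w‖ ^ 2 := by
      refine (upper_bound h w).trans ?_
      apply mul_le_mul_of_nonneg_right _ (by positivity)
      rw [hCdef]; linarith
    have h2 : ‖w‖ ^ 2 ≤ δ ^ 2 * ‖v a‖ ^ 2 := by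
      have := pow_le_pow_left₀ (norm_nonneg w) hwle 2
      calc ‖w‖ ^ 2 ≤ (δ * ‖v a‖) ^ 2 := this
        _ = δ ^ 2 * ‖v a‖ ^ 2 := by ring
    have hδ2 : C * δ ^ 2 = ε * lam := by
      rw [hδdef, Real.sq_sqrt (by positivity)]
      field_simp
    calc h.mulVec w ⬝ᵥ w ≤ C * ‖w‖ ^ 2 := h1
      _ ≤ C * (δ ^ 2 * ‖v a‖ ^ 2) := mul_le_mul_of_nonneg_left h2 hC.le
      _ = ε * (lam * ‖v a‖ ^ 2) := by linear_combination hδ2 * ‖v a‖ ^ 2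
      _ ≤ ε * (h.mulVec (v a) ⬝ᵥ (v a)) := mul_le_mul_of_nonneg_left (hlb (v a)) hε.le
  calc ∑ a : Fin m, h.mulVec ((diagonal d * c a * (diagonal d)⁻¹).mulVec (v a)) ⬝ᵥ
        ((diagonal d * c a * (diagonal d)⁻¹).mulVec (v a))
      ≤ ∑ a : Fin m, ε * (h.mulVec (v a) ⬝ᵥ (v a)) :=
        Finset.sum_le_sum fun a _ => key a
    _ = ε * ∑ a : Fin m, h.mulVec (v a) ⬝ᵥ (v a) := (Finset.mul_sum _ _ _).symm
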